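/- Let b ≥ 2 be an integer, let A_b = Σ_{d=0}^{b−1} 3^(D(b,d)/3) (a real number), and assume A_b > b. Set α = −1 + log(A_b)/log(b). Then there exists a constant C > 0 such that for every integer N ≥ 2, Σ_{n=2}^{N} 3^(‖n−1‖/3) / n ≤ C · N^α, where the powers are real powers and log is the natural logarithm. -/

import Mathlib

/-- `HasCpx n k` means the positive integer `n` can be written using exactly `k` ones,
additions and multiplications. -/
inductive HasCpx : ℕ → ℕ → Prop
  | one : HasCpx 1 1
  | add {a b j k : ℕ} : HasCpx a j → HasCpx b k → HasCpx (a + b) (j + k)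
  | mul {a b j k : ℕ} : HasCpx a j → HasCpx b k → HasCpx (a * b) (j + k)

/-- The integer complexity `‖n‖`: the least number of 1's needed to write `n` using
only `+` and `*`.  By convention (`sInf ∅ = 0` in `ℕ`) we have `cpx 0 = 0`. -/
noncomputable def cpx (n : ℕ) : ℕ := sInf {k | HasCpx n k}

/-- The digit cost `D b r`: the least `c` such that `‖b·n + r‖ ≤ ‖n‖ + c` for
every positive integer `n`. -/
noncomputable def D (b r : ℕ) : ℕ :=
  sInf {c : ℕ | ∀ n : ℕ, 1 ≤ n → cpx (b * n + r) ≤ cpx n + c}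

section Aux

open Finset

lemma hasCpx_self : ∀ {n : ℕ}, 1 ≤ n → HasCpx n n := by
  intro n
  induction n with
  | zero => omega
  | succ m ih =>
    intro _
    rcases Nat.eq_zero_or_pos m with h | h
    · subst h; exact .one
    · exact .add (ih h) .one

lemma cpx_le {n k : ℕ} (h : HasCpx n k) : cpx n ≤ k := Nat.sInf_le h

lemma hasCpx_cpx {n : ℕ} (hn : 1 ≤ n) : HasCpx n (cpx n) :=
  Nat.sInf_mem ⟨n, hasCpx_self hn⟩

lemma hasCpx_add_ones {a j : ℕ} (h : HasCpx a j) (r : ℕ) : HasCpx (a + r) (j + r) := by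
  induction r with
  | zero => simpa
  | succ r ih =>
    show HasCpx (a + r + 1) (j + r + 1)
    exact .add ih .one

lemma D_spec {b : ℕ} (hb : 1 ≤ b) (r : ℕ) :
    ∀ n, 1 ≤ n → cpx (b * n + r) ≤ cpx n + D b r := by
  have hne : {c : ℕ | ∀ n, 1 ≤ n → cpx (b * n + r) ≤ cpx n + c}.Nonempty := by
    refine ⟨b + r, fun n hn => ?_⟩
    have h1 : HasCpx (b * n) (b + cpx n) := .mul (hasCpx_self hb) (hasCpx_cpx hn)
    have h2 : HasCpx (b * n + r) (b + cpx n + r) := hasCpx_add_ones h1 r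
    have := cpx_le h2
    omega
  exact Nat.sInf_mem hne

/-- `fc n = 3^(‖n‖/3)`. -/
noncomputable def fc (n : ℕ) : ℝ := (3 : ℝ) ^ ((cpx n : ℝ) / 3)

lemma fc_nonneg (n : ℕ) : 0 ≤ fc n := Real.rpow_nonneg (by norm_num) _

lemma one_le_fc (n : ℕ) : 1 ≤ fc n := by
  have := Real.rpow_le_rpow_of_exponent_le (by norm_num : (1:ℝ) ≤ 3)
    (by positivity : (0:ℝ) ≤ (cpx n : ℝ) / 3)
  simpa [fc] using this

lemma fc_step {b : ℕ} (hb : 1 ≤ b) (r m : ℕ) (hm : 1 ≤ m) :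
    fc (b * m + r) ≤ (3 : ℝ) ^ ((D b r : ℝ) / 3) * fc m := by
  have h := D_spec hb r m hm
  have h2 : ((cpx (b * m + r) : ℝ)) / 3 ≤ (D b r : ℝ) / 3 + (cpx m : ℝ) / 3 := by
    have : ((cpx (b * m + r) : ℝ)) ≤ (cpx m : ℝ) + (D b r : ℝ) := by exact_mod_cast h
    linarith
  calc fc (b * m + r) ≤ (3:ℝ) ^ ((D b r : ℝ) / 3 + (cpx m : ℝ) / 3) :=
        Real.rpow_le_rpow_of_exponent_le (by norm_num) h2
    _ = _ := Real.rpow_add (by norm_num) _ _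

/-- The key recursion: summing `fc` over one more base-`b` digit multiplies the
bound by `A_b` (up to the constant contribution of one-digit numbers). -/
lemma U_rec {b : ℕ} (hb : 2 ≤ b) (k : ℕ) :
    ∑ n ∈ Ico 1 (b ^ (k + 1)), fc n ≤
      (∑ d ∈ range b, (3:ℝ) ^ ((D b d : ℝ) / 3)) * ∑ n ∈ Ico 1 (b ^ k), fc n
        + ∑ n ∈ Ico 1 b, fc n := by
  have hb1 : 1 ≤ b := by omega
  have hble : b ≤ b ^ (k + 1) := Nat.le_self_pow (by omega) b
  rw [← Finset.sum_Ico_consecutive (fun n => fc n) (show 1 ≤ b by omega) hble]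
  rw [add_comm]
  gcongr ?_ + ?_ <;> [skip; exact le_refl _]
  calc ∑ n ∈ Ico b (b ^ (k + 1)), fc n
      ≤ ∑ n ∈ Ico b (b ^ (k + 1)), (3:ℝ) ^ ((D b (n % b) : ℝ) / 3) * fc (n / b) := by
        refine Finset.sum_le_sum fun n hn => ?_
        simp only [mem_Ico] at hn
        have h1 : 1 ≤ n / b := (Nat.one_le_div_iff (by omega)).2 hn.1
        have := fc_step hb1 (n % b) (n / b) h1
        rwa [Nat.div_add_mod] at this
    _ = ∑ p ∈ (Ico 1 (b ^ k)) ×ˢ (range b), (3:ℝ) ^ ((D b p.2 : ℝ) / 3) * fc p.1 := by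
        refine Finset.sum_nbij' (fun n => (n / b, n % b)) (fun p => b * p.1 + p.2)
          ?_ ?_ ?_ ?_ ?_
        · intro n hn
          simp only [mem_Ico] at hn
          simp only [mem_product, mem_Ico, mem_range]
          refine ⟨⟨(Nat.one_le_div_iff (by omega)).2 hn.1, ?_⟩, Nat.mod_lt _ (by omega)⟩
          rw [Nat.div_lt_iff_lt_mul (by omega)]
          calc n < b ^ (k + 1) := hn.2
            _ = b ^ k * b := by ring
        · intro p hp
          simp only [mem_product, mem_Ico, mem_range] at hp
          obtain ⟨⟨hp1, hp2⟩, hp3⟩ := hp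
          simp only [mem_Ico]
          constructor
          · calc b = b * 1 + 0 := by ring
              _ ≤ b * p.1 + p.2 := by
                have h := Nat.mul_le_mul_left b hp1; omega
          · calc b * p.1 + p.2 < b * p.1 + b := by omega
              _ = b * (p.1 + 1) := by ring
              _ ≤ b * b ^ k := Nat.mul_le_mul_left _ (by omega)
              _ = b ^ (k + 1) := by ring
        · intro n hn
          simp [Nat.div_add_mod]
        · intro p hp
          simp only [mem_product, mem_Ico, mem_range] at hp
          have h1 : (b * p.1 + p.2) / b = p.1 := by
            rw [Nat.mul_add_div (by omega)]
            simp [Nat.div_eq_of_lt hp.2]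
          have h2 : (b * p.1 + p.2) % b = p.2 := by
            rw [Nat.mul_add_mod]
            exact Nat.mod_eq_of_lt hp.2
          simp [h1, h2]
        · intro n hn; rfl
    _ = (∑ d ∈ range b, (3:ℝ) ^ ((D b d : ℝ) / 3)) * ∑ n ∈ Ico 1 (b ^ k), fc n := by
        rw [Finset.sum_product, Finset.sum_comm, Finset.sum_mul]
        congr 1
        ext d
        rw [Finset.mul_sum]

end Aux

open Finset Real

/-- Let `b ≥ 2`, `A_b = ∑_{d<b} 3^(D(b,d)/3)`, and suppose `A_b > b`.  With
`α = -1 + log A_b / log b`, there is `C > 0` with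
`∑_{n=2}^{N} 3^(‖n-1‖/3)/n ≤ C·N^α` for all `N ≥ 2`. -/
theorem sum_rpow_div_le (b : ℕ) (hb : 2 ≤ b)
    (hA : (b : ℝ) < ∑ d ∈ Finset.range b, (3 : ℝ) ^ ((D b d : ℝ) / 3)) :
    ∃ C : ℝ, 0 < C ∧ ∀ N : ℕ, 2 ≤ N →
      ∑ n ∈ Finset.Icc 2 N, (3 : ℝ) ^ ((cpx (n - 1) : ℝ) / 3) / (n : ℝ) ≤
        C * (N : ℝ) ^
          (-1 + Real.log (∑ d ∈ Finset.range b, (3 : ℝ) ^ ((D b d : ℝ) / 3)) /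
            Real.log b) := by
  set A : ℝ := ∑ d ∈ Finset.range b, (3 : ℝ) ^ ((D b d : ℝ) / 3) with hAdef
  clear_value A
  have hbR : (2:ℝ) ≤ (b:ℝ) := by exact_mod_cast hb
  have hb0 : (0:ℝ) < b := by linarith
  have hA1 : (1:ℝ) < A := by linarith
  set c0 : ℝ := ∑ n ∈ Ico 1 b, fc n with hc0def
  clear_value c0
  have hc0 : 0 < c0 := by
    rw [hc0def]
    refine Finset.sum_pos (fun n _ => lt_of_lt_of_le one_pos (one_le_fc n)) ⟨1, ?_⟩
    simp only [mem_Ico]; omega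
  set C1 : ℝ := c0 / (A - 1) with hC1def
  clear_value C1
  have hC1 : 0 < C1 := by
    rw [hC1def]; exact div_pos hc0 (by linarith)
  -- geometric bound on partial sums of fc
  have hU : ∀ k, ∑ n ∈ Ico 1 (b ^ k), fc n ≤ C1 * (A ^ k - 1) := by
    intro k
    induction k with
    | zero => simp
    | succ k ih =>
      have h := U_rec hb k
      rw [← hAdef, ← hc0def] at h
      have h2 : A * ∑ n ∈ Ico 1 (b ^ k), fc n ≤ A * (C1 * (A ^ k - 1)) :=
        mul_le_mul_of_nonneg_left ih (by linarith)
      have h3 : A * (C1 * (A ^ k - 1)) + c0 = C1 * (A ^ (k + 1) - 1) := by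
        have hne : A - 1 ≠ 0 := by linarith
        rw [hC1def]; field_simp
        ring
      linarith
  have hApos : (0:ℝ) < A := by linarith
  have hU' : ∀ k, ∑ n ∈ Ico 1 (b ^ k), fc n ≤ C1 * A ^ k := by
    intro k
    have := hU k
    nlinarith [this, hC1]
  set ρ : ℝ := A / b with hρdef
  clear_value ρ
  have hρ1 : 1 < ρ := by
    rw [hρdef]; exact (one_lt_div hb0).2 hA
  have hρ0 : 0 < ρ := by linarith
  set C4 : ℝ := c0 + C1 * A * ρ / (ρ - 1) with hC4def
  clear_value C4
  have hC4c0 : c0 ≤ C4 := by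
    have : 0 ≤ C1 * A * ρ / (ρ - 1) :=
      div_nonneg (mul_nonneg (mul_nonneg hC1.le hApos.le) hρ0.le) (by linarith)
    linarith [this]
  have hC4 : 0 < C4 := lt_of_lt_of_le hc0 hC4c0
  -- the weighted sums
  have hT : ∀ K : ℕ, ∑ m ∈ Ico 1 (b ^ (K + 1)), fc m / ((m : ℝ) + 1) ≤ C4 * ρ ^ K := by
    intro K
    induction K with
    | zero =>
      calc ∑ m ∈ Ico 1 (b ^ 1), fc m / ((m : ℝ) + 1)
          ≤ ∑ m ∈ Ico 1 b, fc m := by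
            rw [pow_one]
            refine Finset.sum_le_sum fun m _ => ?_
            refine div_le_self (fc_nonneg m) ?_
            have := Nat.cast_nonneg (α := ℝ) m
            linarith
        _ ≤ C4 * ρ ^ 0 := by rw [pow_zero, mul_one, ← hc0def]; exact hC4c0
    | succ K ih =>
      have h1le : 1 ≤ b ^ (K + 1) := Nat.one_le_pow _ _ (by omega)
      have hple : b ^ (K + 1) ≤ b ^ (K + 2) := Nat.pow_le_pow_right (by omega) (by omega)
      rw [← Finset.sum_Ico_consecutive (fun m => fc m / ((m : ℝ) + 1)) h1le hple]
      have hpowR : (0:ℝ) < (b:ℝ) ^ (K + 1) := by positivity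
      have htail : ∑ m ∈ Ico (b ^ (K + 1)) (b ^ (K + 2)), fc m / ((m : ℝ) + 1)
          ≤ C1 * A ^ (K + 2) / (b:ℝ) ^ (K + 1) := by
        calc ∑ m ∈ Ico (b ^ (K + 1)) (b ^ (K + 2)), fc m / ((m : ℝ) + 1)
            ≤ ∑ m ∈ Ico (b ^ (K + 1)) (b ^ (K + 2)), fc m / (b:ℝ) ^ (K + 1) := by
              refine Finset.sum_le_sum fun m hm => ?_
              simp only [mem_Ico] at hm
              have hm1 : ((b:ℝ)) ^ (K + 1) ≤ (m : ℝ) + 1 := by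
                have : (b ^ (K + 1) : ℕ) ≤ m := hm.1
                have h' : ((b ^ (K + 1) : ℕ) : ℝ) ≤ (m : ℝ) := by exact_mod_cast this
                push_cast at h'
                linarith
              exact div_le_div_of_nonneg_left (fc_nonneg m) hpowR hm1
          _ = (∑ m ∈ Ico (b ^ (K + 1)) (b ^ (K + 2)), fc m) / (b:ℝ) ^ (K + 1) := by
              rw [Finset.sum_div]
          _ ≤ (C1 * A ^ (K + 2)) / (b:ℝ) ^ (K + 1) := by
              rw [div_le_div_iff_of_pos_right hpowR]
              calc ∑ m ∈ Ico (b ^ (K + 1)) (b ^ (K + 2)), fc m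
                  ≤ ∑ m ∈ Ico 1 (b ^ (K + 2)), fc m := by
                    refine Finset.sum_le_sum_of_subset_of_nonneg
                      (Finset.Ico_subset_Ico (by omega) le_rfl)
                      (fun m _ _ => fc_nonneg m)
                _ ≤ C1 * A ^ (K + 2) := hU' (K + 2)
      have key : C4 + C1 * A * ρ ≤ C4 * ρ := by
        have hρne : ρ - 1 ≠ 0 := by linarith
        have hexp : C4 * (ρ - 1) = c0 * (ρ - 1) + C1 * A * ρ := by
          rw [hC4def, add_mul, div_mul_cancel₀ _ hρne]
        nlinarith [hexp, hc0, hρ1]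
      have hAρ : C1 * A ^ (K + 2) / (b:ℝ) ^ (K + 1) = C1 * A * ρ ^ (K + 1) := by
        rw [hρdef, div_pow]
        field_simp
        ring
      have hρK : (0:ℝ) ≤ ρ ^ K := by positivity
      have hfin : C4 * ρ ^ K + C1 * A * ρ ^ (K + 1) ≤ C4 * ρ ^ (K + 1) := by
        have h5 := mul_le_mul_of_nonneg_right key hρK
        have e1 : ρ ^ (K + 1) = ρ * ρ ^ K := by ring
        nlinarith [h5]
      calc ∑ m ∈ Ico 1 (b ^ (K + 1)), fc m / ((m : ℝ) + 1)
            + ∑ m ∈ Ico (b ^ (K + 1)) (b ^ (K + 2)), fc m / ((m : ℝ) + 1)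
          ≤ C4 * ρ ^ K + C1 * A ^ (K + 2) / (b:ℝ) ^ (K + 1) := add_le_add ih htail
        _ = C4 * ρ ^ K + C1 * A * ρ ^ (K + 1) := by rw [hAρ]
        _ ≤ C4 * ρ ^ (K + 1) := hfin
  -- the exponent
  set α : ℝ := -1 + Real.log A / Real.log b with hαdef
  clear_value α
  have hlogb : 0 < Real.log b := Real.log_pos (by linarith)
  have hlogA : Real.log b < Real.log A := Real.log_lt_log hb0 hA
  have hα0 : 0 ≤ α := by
    rw [hαdef]
    have : 1 ≤ Real.log A / Real.log b := (le_div_iff₀ hlogb).2 (by linarith)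
    linarith
  have hbα : (b:ℝ) ^ α = ρ := by
    rw [hαdef, Real.rpow_add hb0, Real.rpow_neg_one]
    have h1 : (b:ℝ) ^ (Real.log A / Real.log b) = A := by
      rw [Real.rpow_def_of_pos hb0, mul_comm, div_mul_cancel₀ _ (ne_of_gt hlogb),
        Real.exp_log hApos]
    rw [h1, hρdef]
    ring
  refine ⟨C4, hC4, fun N hN => ?_⟩
  set K := Nat.log b (N - 1) with hKdef
  have hN1 : 1 ≤ N - 1 := by omega
  have hNlt : N - 1 < b ^ (K + 1) := Nat.lt_pow_succ_log_self (by omega) (N - 1)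
  have hNge : b ^ K ≤ N - 1 := Nat.pow_log_le_self b (by omega)
  -- reindex the sum
  have hre : ∑ n ∈ Finset.Icc 2 N, (3 : ℝ) ^ ((cpx (n - 1) : ℝ) / 3) / (n : ℝ)
      = ∑ m ∈ Finset.Icc 1 (N - 1), fc m / ((m : ℝ) + 1) := by
    refine Finset.sum_nbij' (fun n => n - 1) (fun m => m + 1) ?_ ?_ ?_ ?_ ?_
    · intro n hn; simp only [mem_Icc] at hn ⊢; omega
    · intro m hm; simp only [mem_Icc] at hm ⊢; omega
    · intro n hn; simp only [mem_Icc] at hn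
      show n - 1 + 1 = n; omega
    · intro m hm; simp only [mem_Icc] at hm
      show m + 1 - 1 = m; omega
    · intro n hn
      simp only [mem_Icc] at hn
      have h1 : ((n - 1 : ℕ) : ℝ) + 1 = (n : ℝ) := by
        rw [Nat.cast_sub (by omega)]
        ring
      show (3:ℝ) ^ ((cpx (n - 1) : ℝ) / 3) / (n : ℝ) = fc (n - 1) / (((n - 1 : ℕ) : ℝ) + 1)
      rw [h1]
      rfl
  rw [hre]
  calc ∑ m ∈ Finset.Icc 1 (N - 1), fc m / ((m : ℝ) + 1)
      ≤ ∑ m ∈ Ico 1 (b ^ (K + 1)), fc m / ((m : ℝ) + 1) := by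
        refine Finset.sum_le_sum_of_subset_of_nonneg ?_ (fun m _ _ => div_nonneg (fc_nonneg m) (by positivity))
        intro m hm
        simp only [mem_Icc] at hm
        simp only [mem_Ico]
        omega
    _ ≤ C4 * ρ ^ K := hT K
    _ ≤ C4 * (N : ℝ) ^ α := by
        refine mul_le_mul_of_nonneg_left ?_ (le_of_lt hC4)
        have e1 : ρ ^ K = ((b : ℝ) ^ K) ^ α := by
          rw [← hbα, ← Real.rpow_natCast ((b:ℝ) ^ α) K, ← Real.rpow_mul (le_of_lt hb0),
            mul_comm, Real.rpow_mul (le_of_lt hb0), Real.rpow_natCast]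
        rw [e1]
        refine Real.rpow_le_rpow (by positivity) ?_ hα0
        have : (b ^ K : ℕ) ≤ N := by omega
        exact_mod_cast this
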